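/- (Theorem 9: best achievable exponent of the Bayes payoff.) Let A be a nonempty finite set, d : A × A → ℝ nonnegative with d(a,a) = 0 for all a, and let P_0, P_1 be strictly positive PMFs on A and Δ_0, Δ_1 ≥ 0. For a ≥ 0 define g(a) = min over all PMFs P_Y on A of max{ D̃_{Δ_1}(P_Y, P_1), D̃_{Δ_0}(P_Y, P_0) − a }. Then g(a) → g(0) as a → 0 from the right, where g(0) = min over all PMFs P_Y on A of max{ D̃_{Δ_1}(P_Y, P_1), D̃_{Δ_0}(P_Y, P_0) }. -/

import Mathlib

open scoped Classical
open Finset Filter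

noncomputable section

/-- A probability mass function on a finite alphabet, as a real-valued function. -/
def IsPMF {A : Type} [Fintype A] (P : A → ℝ) : Prop :=
  (∀ a, 0 ≤ P a) ∧ ∑ a, P a = 1

/-- Kullback--Leibler divergence `D(Q‖P) = ∑_{a : Q a > 0} Q a · ln (Q a / P a)`. -/
def klDiv {A : Type} [Fintype A] (Q P : A → ℝ) : ℝ :=
  ∑ a, if 0 < Q a then Q a * Real.log (Q a / P a) else 0

/-- First marginal of a joint PMF on `A × A`. -/
def margX {A : Type} [Fintype A] (Q : A × A → ℝ) : A → ℝ := fun a => ∑ b, Q (a, b)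

/-- Second marginal of a joint PMF on `A × A`. -/
def margY {A : Type} [Fintype A] (Q : A × A → ℝ) : A → ℝ := fun b => ∑ a, Q (a, b)

/-- Expected distortion of a joint PMF. -/
def expDist {A : Type} [Fintype A] (d : A → A → ℝ) (Q : A × A → ℝ) : ℝ :=
  ∑ q : A × A, Q q * d q.1 q.2

/-- Generalized divergence `D̃_Δ(P_Y, P)`: minimum of `D(Q_X‖P)` over joint PMFs `Q`
with second marginal `P_Y` and expected distortion at most `Δ`. -/
def Dtilde {A : Type} [Fintype A] (d : A → A → ℝ) (Δ : ℝ) (PY P : A → ℝ) : ℝ :=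
  sInf {v | ∃ Q : A × A → ℝ,
    IsPMF Q ∧ margY Q = PY ∧ expDist d Q ≤ Δ ∧ v = klDiv (margX Q) P}

/-- Earth mover distance between two PMFs. -/
def EMD {A : Type} [Fintype A] (d : A → A → ℝ) (P P' : A → ℝ) : ℝ :=
  sInf {v | ∃ R : A × A → ℝ,
    IsPMF R ∧ margX R = P ∧ margY R = P' ∧ v = expDist d R}

/-- Memoryless (product) probability of a sequence. -/
def seqProb {A : Type} {n : ℕ} (P : A → ℝ) (x : Fin n → A) : ℝ := ∏ i, P (x i)

/-- Additive extension of a per-letter distortion to sequences. -/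
def dSeq {A : Type} {n : ℕ} (d : A → A → ℝ) (x y : Fin n → A) : ℝ := ∑ i, d (x i) (y i)

/-- Empirical PMF (type) of a sequence. -/
def empP {A : Type} [Fintype A] [DecidableEq A] {n : ℕ} (x : Fin n → A) : A → ℝ :=
  fun a => ((univ.filter fun i => x i = a).card : ℝ) / (n : ℝ)

/-- Empirical entropy of a sequence. -/
def empEnt {A : Type} [Fintype A] [DecidableEq A] {n : ℕ} (y : Fin n → A) : ℝ :=
  -∑ a, if 0 < empP y a then empP y a * Real.log (empP y a) else 0

/-- Conditional type class `T(y|x)`. -/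
def condTypeClass {A : Type} [Fintype A] [DecidableEq A] {n : ℕ} (x y : Fin n → A) :
    Finset (Fin n → A) :=
  univ.filter fun y' => ∀ a b : A,
    (univ.filter fun i => x i = a ∧ y' i = b).card
      = (univ.filter fun i => x i = a ∧ y i = b).card

/-- Number of distinct conditional type classes `T(y|x)` arising from `y` with
`dn x y ≤ n·Δ`. -/
def numCondTypes {A : Type} [Fintype A] [DecidableEq A] {n : ℕ}
    (dn : (Fin n → A) → (Fin n → A) → ℝ) (Δ : ℝ) (x : Fin n → A) : ℕ :=
  ((univ.filter fun y => dn x y ≤ (n : ℝ) * Δ).image fun y => condTypeClass x y).card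

/-- The optimal attack channel `A*_Δ(y|x) = c_n(x)/|T(y|x)|` on admissible `y`,
and `0` otherwise; here `c_n(x)` is the reciprocal of the number of admissible
conditional type classes. -/
def Astar {A : Type} [Fintype A] [DecidableEq A] {n : ℕ}
    (dn : (Fin n → A) → (Fin n → A) → ℝ) (Δ : ℝ) (x y : Fin n → A) : ℝ :=
  if dn x y ≤ (n : ℝ) * Δ then
    ((numCondTypes dn Δ x : ℝ))⁻¹ / ((condTypeClass x y).card : ℝ)
  else 0

/-- A channel on `A^n`: `W x y` is the conditional probability of output `y` given input `x`. -/
def IsChannel {A : Type} [Fintype A] {n : ℕ}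
    (W : (Fin n → A) → (Fin n → A) → ℝ) : Prop :=
  (∀ x y, 0 ≤ W x y) ∧ ∀ x, ∑ y, W x y = 1

/-- The class `C_Δ` of admissible channels: those assigning zero probability to any
`y` with `dn x y > n·Δ`. -/
def InC {A : Type} [Fintype A] {n : ℕ}
    (dn : (Fin n → A) → (Fin n → A) → ℝ) (Δ : ℝ)
    (W : (Fin n → A) → (Fin n → A) → ℝ) : Prop :=
  IsChannel W ∧ ∀ x y, (n : ℝ) * Δ < dn x y → W x y = 0

/-- False positive probability: `Φ y` is the probability of deciding `H₁` given `y`. -/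
def PFP {A : Type} [Fintype A] {n : ℕ} (P0 : A → ℝ) (Φ : (Fin n → A) → ℝ)
    (A0 : (Fin n → A) → (Fin n → A) → ℝ) : ℝ :=
  ∑ x, ∑ y, seqProb P0 x * A0 x y * Φ y

/-- False negative probability. -/
def PFN {A : Type} [Fintype A] {n : ℕ} (P1 : A → ℝ) (Φ : (Fin n → A) → ℝ)
    (A1 : (Fin n → A) → (Fin n → A) → ℝ) : ℝ :=
  ∑ x, ∑ y, seqProb P1 x * A1 x y * (1 - Φ y)

/-- Sequence-level generalized divergence
`D̃ⁿ_Δ(y,P) = min_{x : d(x,y) ≤ nΔ} D(P̂_x‖P)`. -/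
def DtildeN {A : Type} [Fintype A] [DecidableEq A] {n : ℕ} (d : A → A → ℝ) (Δ : ℝ)
    (y : Fin n → A) (P : A → ℝ) : ℝ :=
  sInf {v | ∃ x : Fin n → A, dSeq d x y ≤ (n : ℝ) * Δ ∧ v = klDiv (empP x) P}

section Aux

variable {A : Type} [Fintype A]

lemma klDiv_lower (Q P : A → ℝ) (hQ0 : ∀ a, 0 ≤ Q a) (hQ1 : ∀ a, Q a ≤ 1)
    (hPpos : ∀ a, 0 < P a) (hP1 : ∀ a, P a ≤ 1) :
    -(Fintype.card A : ℝ) ≤ klDiv Q P := by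
  have h : ∀ a : A, (-1 : ℝ) ≤ (if 0 < Q a then Q a * Real.log (Q a / P a) else 0) := by
    intro a
    by_cases hq : 0 < Q a
    · simp only [hq, if_pos]
      have hlog : Real.log (Q a / P a) = Real.log (Q a) - Real.log (P a) :=
        Real.log_div (ne_of_gt hq) (ne_of_gt (hPpos a))
      rw [hlog, mul_sub]
      have h1 : -1 ≤ Q a * Real.log (Q a) := by
        have : Real.log (1 / Q a) ≤ 1 / Q a - 1 :=
          Real.log_le_sub_one_of_pos (by positivity)
        have hlog2 : Real.log (1 / Q a) = - Real.log (Q a) := by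
          rw [one_div, Real.log_inv]
        rw [hlog2] at this
        have hmul := mul_le_mul_of_nonneg_left this hq.le
        have heq : Q a * (1 / Q a - 1) = 1 - Q a := by field_simp
        rw [heq] at hmul
        linarith
      have h2 : 0 ≤ - (Q a * Real.log (P a)) := by
        have : Real.log (P a) ≤ 0 := Real.log_nonpos (le_of_lt (hPpos a)) (hP1 a)
        nlinarith [hq.le]
      linarith
    · simp only [hq, if_neg, if_false]; norm_num
  calc -(Fintype.card A : ℝ) = ∑ _a : A, (-1 : ℝ) := by
        rw [Finset.sum_const, Finset.card_univ, nsmul_eq_mul, mul_neg_one]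
    _ ≤ klDiv Q P := Finset.sum_le_sum fun a _ => h a

lemma pmf_le_one (P : A → ℝ) (hP : IsPMF P) (a : A) : P a ≤ 1 := by
  have := Finset.single_le_sum (f := P) (fun i _ => hP.1 i) (Finset.mem_univ a)
  rw [hP.2] at this; exact this

lemma margX_pmf (Q : A × A → ℝ) (hQ : IsPMF Q) : IsPMF (margX Q) := by
  constructor
  · intro a; exact Finset.sum_nonneg fun b _ => hQ.1 _
  · rw [show ∑ a, margX Q a = ∑ q : A × A, Q q from ?_, hQ.2]
    rw [Fintype.sum_prod_type]; rfl

/-- The diagonal coupling of `PY`. -/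
def diagQ (PY : A → ℝ) : A × A → ℝ :=
  fun q => if q.1 = q.2 then PY q.2 else 0

lemma Dtilde_set_mem (d : A → A → ℝ) (Δ : ℝ) (hΔ : 0 ≤ Δ)
    (hdrefl : ∀ a, d a a = 0) (PY P : A → ℝ) (hPY : IsPMF PY) :
    klDiv (margX (diagQ PY)) P ∈
      {v | ∃ Q : A × A → ℝ,
        IsPMF Q ∧ margY Q = PY ∧ expDist d Q ≤ Δ ∧ v = klDiv (margX Q) P} := by
  refine ⟨diagQ PY, ⟨fun q => ?_, ?_⟩, ?_, ?_, rfl⟩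
  · unfold diagQ; split <;> simp [hPY.1]
  · rw [Fintype.sum_prod_type]
    have : ∀ a : A, ∑ b, diagQ PY (a, b) = PY a := by
      intro a; unfold diagQ
      simp only []
      rw [Finset.sum_eq_single a] <;> simp +contextual [eq_comm]
    simp only [this, hPY.2]
  · funext b
    unfold margY diagQ
    rw [Finset.sum_eq_single b] <;> simp +contextual
  · have : expDist d (diagQ PY) = 0 := by
      unfold expDist diagQ
      apply Finset.sum_eq_zero
      intro q _
      rcases eq_or_ne q.1 q.2 with h | h
      · simp [h, hdrefl]
      · simp [h]
    rw [this]; exact hΔ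

lemma Dtilde_lower (d : A → A → ℝ) (Δ : ℝ) (hΔ : 0 ≤ Δ)
    (hdrefl : ∀ a, d a a = 0) (PY P : A → ℝ) (hPY : IsPMF PY)
    (hPpos : ∀ a, 0 < P a) (hP1 : ∀ a, P a ≤ 1) :
    -(Fintype.card A : ℝ) ≤ Dtilde d Δ PY P := by
  apply le_csInf
  · exact ⟨_, Dtilde_set_mem d Δ hΔ hdrefl PY P hPY⟩
  · rintro v ⟨Q, hQ, _, _, rfl⟩
    have hm := margX_pmf Q hQ
    exact klDiv_lower _ _ hm.1 (fun a => pmf_le_one _ hm a) hPpos hP1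

end Aux


/-- Theorem 9: best achievable exponent of the Bayes payoff. -/
theorem best_bayes_exponent
    {A : Type} [Fintype A] [Nonempty A]
    (d : A → A → ℝ) (hd : ∀ a b, 0 ≤ d a b) (hdrefl : ∀ a, d a a = 0)
    (P0 P1 : A → ℝ) (hP0 : IsPMF P0) (hP1 : IsPMF P1)
    (hP0pos : ∀ a, 0 < P0 a) (hP1pos : ∀ a, 0 < P1 a)
    (Δ0 Δ1 : ℝ) (hΔ0 : 0 ≤ Δ0) (hΔ1 : 0 ≤ Δ1) :
    Tendsto
      (fun a : ℝ => sInf {v | ∃ PY : A → ℝ, IsPMF PY ∧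
        v = max (Dtilde d Δ1 PY P1) (Dtilde d Δ0 PY P0 - a)})
      (nhdsWithin 0 (Set.Ioi 0))
      (nhds (sInf {v | ∃ PY : A → ℝ, IsPMF PY ∧
        v = max (Dtilde d Δ1 PY P1) (Dtilde d Δ0 PY P0)})) := by
  classical
  set S : ℝ → Set ℝ := fun a => {v | ∃ PY : A → ℝ, IsPMF PY ∧
    v = max (Dtilde d Δ1 PY P1) (Dtilde d Δ0 PY P0 - a)} with hS
  have hSeq : ∀ a : ℝ, {v | ∃ PY : A → ℝ, IsPMF PY ∧
      v = max (Dtilde d Δ1 PY P1) (Dtilde d Δ0 PY P0 - a)} = S a := fun a => rfl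
  have hS0 : {v | ∃ PY : A → ℝ, IsPMF PY ∧
      v = max (Dtilde d Δ1 PY P1) (Dtilde d Δ0 PY P0)} = S 0 := by
    simp [hS]
  rw [hS0]
  simp only [hSeq]
  have hP0le : ∀ a, P0 a ≤ 1 := fun a => pmf_le_one P0 hP0 a
  have hP1le : ∀ a, P1 a ≤ 1 := fun a => pmf_le_one P1 hP1 a
  -- uniform PMF
  have hunif : IsPMF (fun _ : A => (Fintype.card A : ℝ)⁻¹) := by
    constructor
    · intro a; positivity
    · rw [Finset.sum_const]
      have hc : 0 < (Fintype.card A : ℝ) := by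
        exact_mod_cast Fintype.card_pos
      rw [Finset.card_univ, nsmul_eq_mul]
      field_simp
  have hne : ∀ a : ℝ, (S a).Nonempty := fun a => ⟨_, _, hunif, rfl⟩
  have hbdd : ∀ a : ℝ, BddBelow (S a) := by
    intro a
    refine ⟨-(Fintype.card A : ℝ), ?_⟩
    rintro v ⟨PY, hPY, rfl⟩
    exact le_trans (Dtilde_lower d Δ1 hΔ1 hdrefl PY P1 hPY hP1pos hP1le)
      (le_max_left _ _)
  set g : ℝ → ℝ := fun a => sInf (S a) with hg
  have hupper : ∀ a : ℝ, 0 ≤ a → g a ≤ g 0 := by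
    intro a ha
    apply le_csInf (hne 0)
    rintro v ⟨PY, hPY, rfl⟩
    refine le_trans (csInf_le (hbdd a) ⟨PY, hPY, rfl⟩) ?_
    apply max_le_max le_rfl
    simp; linarith
  have hlower : ∀ a : ℝ, 0 ≤ a → g 0 - a ≤ g a := by
    intro a ha
    apply le_csInf (hne a)
    rintro v ⟨PY, hPY, rfl⟩
    rw [sub_le_iff_le_add]
    have hmem : max (Dtilde d Δ1 PY P1) (Dtilde d Δ0 PY P0 - 0) ∈ S 0 :=
      ⟨PY, hPY, rfl⟩
    have h1 : g 0 ≤ max (Dtilde d Δ1 PY P1) (Dtilde d Δ0 PY P0 - 0) :=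
      csInf_le (hbdd 0) hmem
    rw [sub_zero] at h1
    have h2 : max (Dtilde d Δ1 PY P1) (Dtilde d Δ0 PY P0) ≤
        max (Dtilde d Δ1 PY P1) (Dtilde d Δ0 PY P0 - a) + a := by
      rcases le_total (Dtilde d Δ1 PY P1) (Dtilde d Δ0 PY P0) with h | h
      · rw [max_eq_right h]
        calc Dtilde d Δ0 PY P0 = (Dtilde d Δ0 PY P0 - a) + a := by ring
          _ ≤ _ := by gcongr; exact le_max_right _ _
      · rw [max_eq_left h]
        calc Dtilde d Δ1 PY P1 ≤ Dtilde d Δ1 PY P1 + a := by linarith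
          _ ≤ _ := by gcongr; exact le_max_left _ _
    linarith
  have hlo : Tendsto (fun a : ℝ => g 0 - a) (nhdsWithin 0 (Set.Ioi 0)) (nhds (g 0)) := by
    have : Tendsto (fun a : ℝ => g 0 - a) (nhds 0) (nhds (g 0 - 0)) :=
      (tendsto_const_nhds.sub tendsto_id)
    rw [sub_zero] at this
    exact this.mono_left nhdsWithin_le_nhds
  have hhi : Tendsto (fun _ : ℝ => g 0) (nhdsWithin 0 (Set.Ioi 0)) (nhds (g 0)) :=
    tendsto_const_nhds
  refine tendsto_of_tendsto_of_tendsto_of_le_of_le' hlo hhi ?_ ?_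
  · filter_upwards [self_mem_nhdsWithin] with a (ha : a ∈ Set.Ioi 0)
    exact hlower a (le_of_lt ha)
  · filter_upwards [self_mem_nhdsWithin] with a (ha : a ∈ Set.Ioi 0)
    exact hupper a (le_of_lt ha)
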